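/- For every permutation w of {1,…,n}: Φ(w) ≤_R w in right weak order, and Φ_inv(w) ≤_L w in left weak order. In other words, there are length-additive factorizations w = Φ(w)·v and w = u·Φ_inv(w) for some permutations u, v. -/

import Mathlib

open scoped Classical

noncomputable section

namespace RajRegularity

variable {n : ℕ}

/-- Maximal length of an increasing subsequence of `w(i), …, w(n)` beginning with `w(i)`:
the largest cardinality of a set `s` of positions that contains `i`, consists of positions
`≥ i`, and on which `w` is strictly increasing. -/
def lisFrom (w : Equiv.Perm (Fin n)) (i : Fin n) : ℕ :=
  (Finset.univ.filter fun s : Finset (Fin n) =>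
      i ∈ s ∧ (∀ j ∈ s, i ≤ j) ∧ ∀ j ∈ s, ∀ k ∈ s, j < k → w j < w k).sup Finset.card

/-- `rajCode w i = (n − i + 1) −` (maximal length of an increasing subsequence of
`w(i), …, w(n)` beginning with `w(i)`); here positions are 0-based, so the number of
positions `≥ i` is `n - i`. -/
def rajCode (w : Equiv.Perm (Fin n)) (i : Fin n) : ℕ :=
  (n - (i : ℕ)) - lisFrom w i

/-- The Rajchgot index `raj w = Σᵢ rajCode w i`. -/
def raj (w : Equiv.Perm (Fin n)) : ℕ := ∑ i, rajCode w i

/-- The number of inversions of `w`: pairs of positions `i < j` with `w i > w j`. -/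
def invNum (w : Equiv.Perm (Fin n)) : ℕ :=
  (Finset.univ.filter fun p : Fin n × Fin n => p.1 < p.2 ∧ w p.2 < w p.1).card

/-- The `i`-th entry of the inv code: `ℓ_i(w) = #{ j : i < j, w j < w i }`. -/
def ellCode (w : Equiv.Perm (Fin n)) (i : Fin n) : ℕ :=
  (Finset.univ.filter fun j : Fin n => i < j ∧ w j < w i).card

/-- The set of descent positions of `w` (0-based position `j` with `w j > w (j+1)`). -/
def descents (w : Equiv.Perm (Fin n)) : Finset (Fin n) :=
  Finset.univ.filter fun j : Fin n =>
    if h : (j : ℕ) + 1 < n then w ⟨(j : ℕ) + 1, h⟩ < w j else False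

/-- The major index: the sum of the (1-based) descent positions of `w`. -/
def maj (w : Equiv.Perm (Fin n)) : ℕ := ∑ j ∈ descents w, ((j : ℕ) + 1)

/-- `mCode w i`: the number of descents of `w` at positions `≥ i`. -/
def mCode (w : Equiv.Perm (Fin n)) (i : Fin n) : ℕ :=
  ((descents w).filter fun j => i ≤ j).card

/-- `w` is dominant iff it avoids the pattern 132. -/
def Dominant (w : Equiv.Perm (Fin n)) : Prop :=
  ¬ ∃ i j k : Fin n, i < j ∧ j < k ∧ w i < w k ∧ w k < w j

/-- `w` is fireworks iff there are no positions `i < j` with `w j < w (j+1) < w i`. -/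
def Fireworks (w : Equiv.Perm (Fin n)) : Prop :=
  ¬ ∃ (i j : Fin n) (h : (j : ℕ) + 1 < n),
      i < j ∧ w j < w ⟨(j : ℕ) + 1, h⟩ ∧ w ⟨(j : ℕ) + 1, h⟩ < w i

/-- `w` is inverse fireworks iff `w⁻¹` is fireworks. -/
def InvFireworks (w : Equiv.Perm (Fin n)) : Prop := Fireworks w⁻¹

/-- `w` is a valley permutation: for some `a`, it is strictly decreasing on positions `≤ a`
and strictly increasing on positions `≥ a`. -/
def Valley (w : Equiv.Perm (Fin n)) : Prop :=
  ∃ a : ℕ, (∀ i j : Fin n, i < j → (j : ℕ) ≤ a → w j < w i) ∧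
    ∀ i j : Fin n, a ≤ (i : ℕ) → i < j → w i < w j

/-- `eps w i` is the (1-based) blob index `ε_i(w) = i + r_i(w)`. -/
def eps (w : Equiv.Perm (Fin n)) (i : Fin n) : ℕ := (i : ℕ) + 1 + rajCode w i

/-- The shape of `w`: `α_k(w) = #{ i : ε_i(w) = k }` (here `k : Fin n` stands for the
1-based index `k + 1`). -/
def shape (w : Equiv.Perm (Fin n)) : Fin n → ℕ := fun k =>
  (Finset.univ.filter fun i : Fin n => eps w i = (k : ℕ) + 1).card

/-- Dominance order on shapes: `α ⪰ β` iff every tail sum of `α` is at least the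
corresponding tail sum of `β`. -/
def Dominates (α β : Fin n → ℕ) : Prop :=
  ∀ m : Fin n,
    ∑ k ∈ Finset.univ.filter (fun k : Fin n => m ≤ k), β k ≤
      ∑ k ∈ Finset.univ.filter (fun k : Fin n => m ≤ k), α k

/-- Right weak order: `u ≤_R w` iff `w = u * v` length-additively. -/
def leR (u w : Equiv.Perm (Fin n)) : Prop :=
  ∃ v : Equiv.Perm (Fin n), w = u * v ∧ invNum w = invNum u + invNum v

/-- Left weak order: `u ≤_L w` iff `w = v * u` length-additively. -/
def leL (u w : Equiv.Perm (Fin n)) : Prop :=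
  ∃ v : Equiv.Perm (Fin n), w = v * u ∧ invNum w = invNum v + invNum u

/-- Two-sided weak order: the transitive closure of the union of left and right weak
orders (both are reflexive, so we may use the reflexive-transitive closure). -/
def leLR (u w : Equiv.Perm (Fin n)) : Prop :=
  Relation.ReflTransGen (fun a b : Equiv.Perm (Fin n) => leL a b ∨ leR a b) u w

/-- The maximum of the block of the set partition `π(w)` containing the value `v`;
the block of `v` is `{ v' : ε_{w⁻¹ v'}(w) = ε_{w⁻¹ v}(w) }`. -/
def blockMax (w : Equiv.Perm (Fin n)) (v : Fin n) : ℕ :=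
  ((Finset.univ.filter fun v' : Fin n => eps w (w⁻¹ v') = eps w (w⁻¹ v)).max'
      ⟨v, Finset.mem_filter.mpr ⟨Finset.mem_univ v, rfl⟩⟩).val

/-- The fireworks map `Φ`: the one-line word of `Φ w` lists the blocks of `π(w)` in
increasing order of their maxima, each block written in decreasing order.  Equivalently,
`Φ w` sorts the values by the key (max of block, value reversed), lexicographically. -/
def Phi (w : Equiv.Perm (Fin n)) : Equiv.Perm (Fin n) :=
  Tuple.sort fun v : Fin n => n * blockMax w v + (n - 1 - (v : ℕ))

/-- The inverse fireworks map `Φ_inv w = Φ(w⁻¹)⁻¹`. -/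
def PhiInv (w : Equiv.Perm (Fin n)) : Equiv.Perm (Fin n) := (Phi w⁻¹)⁻¹

/-- Partial sums of a sequence of block sizes. -/
def psum (a : ℕ → ℕ) (m : ℕ) : ℕ := ∑ j ∈ Finset.range m, a j

/-- The index of the block (interval `[psum a m, psum a (m+1))`) containing the value `v`. -/
def blockIdx (n : ℕ) (a : ℕ → ℕ) (v : Fin n) : ℕ :=
  ((Finset.range n).filter fun m => psum a (m + 1) ≤ (v : ℕ)).card

/-- The layered permutation with block sizes `a 0, a 1, …`: it reverses each of the
consecutive intervals `[psum a m, psum a (m+1))` of `{0, …, n-1}`.  Equivalently, its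
one-line word sorts the values by (block index, value reversed) lexicographically. -/
def layered (n : ℕ) (a : ℕ → ℕ) : Equiv.Perm (Fin n) :=
  Tuple.sort fun v : Fin n => n * blockIdx n a v + (n - 1 - (v : ℕ))

/-- The layered permutation `e_α` associated to a shape `α : Fin n → ℕ`. -/
def eOf (α : Fin n → ℕ) : Equiv.Perm (Fin n) :=
  layered n fun m => if h : m < n then α ⟨m, h⟩ else 0

/-! ### Auxiliary lemmas -/

section Aux

variable (w : Equiv.Perm (Fin n))

lemma le_lisFrom {i : Fin n} {s : Finset (Fin n)} (h1 : i ∈ s) (h2 : ∀ j ∈ s, i ≤ j)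
    (h3 : ∀ j ∈ s, ∀ k ∈ s, j < k → w j < w k) : s.card ≤ lisFrom w i :=
  Finset.le_sup (f := Finset.card)
    (Finset.mem_filter.mpr ⟨Finset.mem_univ _, h1, h2, h3⟩)

lemma exists_lis (i : Fin n) :
    ∃ s : Finset (Fin n), (i ∈ s ∧ (∀ j ∈ s, i ≤ j) ∧
      ∀ j ∈ s, ∀ k ∈ s, j < k → w j < w k) ∧ s.card = lisFrom w i := by
  have hne : (Finset.univ.filter fun s : Finset (Fin n) =>
      i ∈ s ∧ (∀ j ∈ s, i ≤ j) ∧ ∀ j ∈ s, ∀ k ∈ s, j < k → w j < w k).Nonempty := by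
    refine ⟨{i}, Finset.mem_filter.mpr ⟨Finset.mem_univ _, by simp, by simp, ?_⟩⟩
    intro j hj k hk hjk
    simp only [Finset.mem_singleton] at hj hk
    subst hj; subst hk; exact absurd hjk (lt_irrefl _)
  obtain ⟨s, hs, h⟩ := Finset.exists_mem_eq_sup _ hne Finset.card
  exact ⟨s, (Finset.mem_filter.mp hs).2, h.symm⟩

lemma one_le_lisFrom (i : Fin n) : 1 ≤ lisFrom w i := by
  have := le_lisFrom w (i := i) (s := {i}) (by simp) (by simp) ?_
  · simpa using this
  · intro j hj k hk hjk
    simp only [Finset.mem_singleton] at hj hk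
    subst hj; subst hk; exact absurd hjk (lt_irrefl _)

lemma lisFrom_le (i : Fin n) : lisFrom w i ≤ n - (i : ℕ) := by
  apply Finset.sup_le
  intro s hs
  obtain ⟨-, -, hge, -⟩ := Finset.mem_filter.mp hs
  calc s.card ≤ (Finset.Ici i).card :=
        Finset.card_le_card (fun j hj => Finset.mem_Ici.mpr (hge j hj))
    _ = n - (i : ℕ) := Fin.card_Ici i

/-- Inserting a smaller index in front of a feasible set for a later index. -/
lemma card_insert_le_lisFrom {i m' : Fin n} {s : Finset (Fin n)} (him : i < m')
    (hm : m' ∈ s) (hge : ∀ j ∈ s, m' ≤ j)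
    (hinc : ∀ j ∈ s, ∀ k ∈ s, j < k → w j < w k)
    (hw : w i < w m') :
    s.card + 1 ≤ lisFrom w i := by
  have hnot : i ∉ s := fun h => absurd (hge i h) (not_le.mpr him)
  have hwk : ∀ k ∈ s, w i < w k := by
    intro k hk
    rcases eq_or_lt_of_le (hge k hk) with h | h
    · rwa [← h]
    · exact lt_trans hw (hinc m' hm k hk h)
  have hle := le_lisFrom w (i := i) (s := insert i s) (Finset.mem_insert_self _ _)
    (by
      intro j hj
      rcases Finset.mem_insert.mp hj with h | h
      · exact le_of_eq h.symm
      · exact le_of_lt (lt_of_lt_of_le him (hge j h)))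
    (by
      intro a ha b hb hab
      rcases Finset.mem_insert.mp ha with h1 | h1 <;>
        rcases Finset.mem_insert.mp hb with h2 | h2
      · rw [h1, h2] at hab; exact absurd hab (lt_irrefl i)
      · rw [h1]; exact hwk b h2
      · exact absurd hab (by
          rw [h2]
          exact not_lt.mpr (le_of_lt (lt_of_lt_of_le him (hge a h1))))
      · exact hinc a h1 b h2 hab)
  rwa [Finset.card_insert_of_notMem hnot] at hle

/-- Along an increasing pair of positions, `lisFrom` strictly drops. -/
lemma lisFrom_succ_le {i j : Fin n} (hij : i < j) (hw : w i < w j) :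
    lisFrom w j + 1 ≤ lisFrom w i := by
  obtain ⟨s, ⟨hjs, hge, hinc⟩, hcard⟩ := exists_lis w j
  have := card_insert_le_lisFrom w hij hjs hge hinc hw
  omega

/-- From a position of `lisFrom` value `c + 1` (with `c ≥ 1`) there is a later position of
strictly larger `w`-value with `lisFrom` value exactly `c`. -/
lemma lisFrom_next {m : Fin n} {c : ℕ} (hc : 1 ≤ c) (h : lisFrom w m = c + 1) :
    ∃ m' : Fin n, w m < w m' ∧ lisFrom w m' = c := by
  obtain ⟨s, ⟨hms, hge, hinc⟩, hcard⟩ := exists_lis w m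
  have hcard' : (s.erase m).card = c := by
    rw [Finset.card_erase_of_mem hms, hcard, h]
    omega
  have hne : (s.erase m).Nonempty := Finset.card_pos.mp (by omega)
  set m' := (s.erase m).min' hne with hm'
  have hm's : m' ∈ s.erase m := Finset.min'_mem _ hne
  have hm'mem : m' ∈ s := Finset.mem_of_mem_erase hm's
  have hm'ne : m' ≠ m := Finset.ne_of_mem_erase hm's
  have hmm' : m < m' := lt_of_le_of_ne (hge m' hm'mem) (Ne.symm hm'ne)
  have hwmm' : w m < w m' := hinc m hms m' hm'mem hmm'
  refine ⟨m', hwmm', le_antisymm ?_ ?_⟩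
  · -- lisFrom w m' ≤ c : insert m into an achieving set for m'
    obtain ⟨s', ⟨hm's', hge', hinc'⟩, hcard''⟩ := exists_lis w m'
    have := card_insert_le_lisFrom w hmm' hm's' hge' hinc' hwmm'
    omega
  · -- c ≤ lisFrom w m' : s.erase m is feasible for m'
    have hle : (s.erase m).card ≤ lisFrom w m' := by
      apply le_lisFrom w hm's
      · intro k hk
        exact Finset.min'_le _ k hk
      · intro a ha b hb hab
        exact hinc a (Finset.mem_of_mem_erase ha) b (Finset.mem_of_mem_erase hb) hab
    omega

/-- Walking down a longest increasing subsequence hits every `lisFrom` value below. -/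
lemma lisFrom_chain : ∀ (k : ℕ) (m : Fin n) (ℓ : ℕ), 1 ≤ ℓ → lisFrom w m = ℓ + k + 1 →
    ∃ t : Fin n, w m < w t ∧ lisFrom w t = ℓ := by
  intro k
  induction k with
  | zero =>
    intro m ℓ hℓ h
    exact lisFrom_next w hℓ h
  | succ k ih =>
    intro m ℓ hℓ h
    obtain ⟨m', hwm', hm'⟩ := lisFrom_next w (m := m) (c := ℓ + k + 1) (by omega) (by omega)
    obtain ⟨t, hwt, ht⟩ := ih m' ℓ hℓ hm'
    exact ⟨t, lt_trans hwm' hwt, ht⟩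

lemma eps_eq (i : Fin n) : eps w i = n + 1 - lisFrom w i := by
  have h1 := one_le_lisFrom w i
  have h2 := lisFrom_le w i
  have h3 : (i : ℕ) < n := i.isLt
  unfold eps rajCode
  omega

lemma eps_eq_iff {i j : Fin n} : eps w i = eps w j ↔ lisFrom w i = lisFrom w j := by
  rw [eps_eq, eps_eq]
  have h1 := one_le_lisFrom w i
  have h2 := lisFrom_le w i
  have h3 := one_le_lisFrom w j
  have h4 := lisFrom_le w j
  have h5 : (i : ℕ) < n := i.isLt
  have h6 : (j : ℕ) < n := j.isLt
  omega

/-- Arithmetic on the sorting keys. -/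
lemma key_lt_key {n a b x y : ℕ} (hx : x < n) (hab : a < b) :
    n * a + (n - 1 - x) < n * b + (n - 1 - y) :=
  calc n * a + (n - 1 - x) < n * a + n := by
        have := Nat.sub_le (n - 1) x
        omega
    _ = n * (a + 1) := by ring
    _ ≤ n * b := Nat.mul_le_mul_left n hab
    _ ≤ n * b + (n - 1 - y) := Nat.le_add_right _ _

/-- Block maxima are strictly ordered along non-inversions of `w`. -/
lemma blockMax_lt {p q : Fin n} (hpq : p < q) (hw : w⁻¹ p < w⁻¹ q) :
    blockMax w p < blockMax w q := by
  have hwi : w (w⁻¹ p) = p := w.apply_symm_apply p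
  have hwj : w (w⁻¹ q) = q := w.apply_symm_apply q
  have hL : lisFrom w (w⁻¹ q) + 1 ≤ lisFrom w (w⁻¹ p) := by
    apply lisFrom_succ_le w hw
    rw [hwi, hwj]; exact hpq
  -- the max of the block of p
  have hSne : p ∈ Finset.univ.filter
      (fun v' : Fin n => eps w (w⁻¹ v') = eps w (w⁻¹ p)) :=
    Finset.mem_filter.mpr ⟨Finset.mem_univ _, rfl⟩
  set M := (Finset.univ.filter
      (fun v' : Fin n => eps w (w⁻¹ v') = eps w (w⁻¹ p))).max'
      ⟨p, Finset.mem_filter.mpr ⟨Finset.mem_univ p, rfl⟩⟩ with hM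
  have hMmem : M ∈ Finset.univ.filter
      (fun v' : Fin n => eps w (w⁻¹ v') = eps w (w⁻¹ p)) := Finset.max'_mem _ _
  have hMe : eps w (w⁻¹ M) = eps w (w⁻¹ p) := (Finset.mem_filter.mp hMmem).2
  have hLm : lisFrom w (w⁻¹ M) = lisFrom w (w⁻¹ p) := (eps_eq_iff w).mp hMe
  -- find an element of the block of q larger than M
  have hLj1 := one_le_lisFrom w (w⁻¹ q)
  obtain ⟨t, hwt, ht⟩ := lisFrom_chain w
    (lisFrom w (w⁻¹ M) - lisFrom w (w⁻¹ q) - 1) (w⁻¹ M) (lisFrom w (w⁻¹ q))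
    hLj1 (by omega)
  have htq : w t ∈ Finset.univ.filter
      (fun v' : Fin n => eps w (w⁻¹ v') = eps w (w⁻¹ q)) := by
    refine Finset.mem_filter.mpr ⟨Finset.mem_univ _, ?_⟩
    rw [show w⁻¹ (w t) = t from w.symm_apply_apply t]
    exact (eps_eq_iff w).mpr ht
  have hle : w t ≤ (Finset.univ.filter
      (fun v' : Fin n => eps w (w⁻¹ v') = eps w (w⁻¹ q))).max'
      ⟨q, Finset.mem_filter.mpr ⟨Finset.mem_univ q, rfl⟩⟩ := Finset.le_max' _ (w t) htq
  have hMt : M < w t := by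
    rw [← show w (w⁻¹ M) = M from w.apply_symm_apply M]
    exact hwt
  show (_ : Fin n).val < (_ : Fin n).val
  exact lt_of_lt_of_le hMt hle

/-- The key function used to define `Phi` is injective. -/
lemma phiKey_injective : Function.Injective
    (fun v : Fin n => n * blockMax w v + (n - 1 - (v : ℕ))) := by
  intro v v' h
  simp only at h
  have hv : (v : ℕ) < n := v.isLt
  have hv' : (v' : ℕ) < n := v'.isLt
  have hbm : blockMax w v = blockMax w v' := by
    rcases lt_trichotomy (blockMax w v) (blockMax w v') with hlt | heq | hgt
    · exact absurd h (ne_of_lt (key_lt_key hv hlt))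
    · exact heq
    · exact absurd h (ne_of_gt (key_lt_key hv' hgt))
  rw [hbm] at h
  have h2 : (n : ℕ) - 1 - (v : ℕ) = n - 1 - (v' : ℕ) := by omega
  exact Fin.ext (by omega)

/-- Every value-inversion of `Phi w` is a value-inversion of `w`. -/
lemma phi_inversion_subset {p q : Fin n} (hpq : p < q)
    (h : (Phi w)⁻¹ q < (Phi w)⁻¹ p) : w⁻¹ q < w⁻¹ p := by
  set f := fun v : Fin n => n * blockMax w v + (n - 1 - (v : ℕ)) with hf
  have hmono : StrictMono (f ∘ Tuple.sort f) :=
    (Tuple.monotone_sort f).strictMono_of_injective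
      ((phiKey_injective w).comp (Tuple.sort f).injective)
  have hfq : f q < f p := by
    have h2 := hmono h
    simpa only [Function.comp_apply, show ∀ x, Tuple.sort f ((Phi w)⁻¹ x) = x from fun x => (Tuple.sort f).apply_symm_apply x] using h2
  -- since q > p, the tiebreaker favors q, so blockMax q ≤ blockMax p
  have hbm : blockMax w q ≤ blockMax w p := by
    by_contra hcon
    push_neg at hcon
    have hp : (p : ℕ) < n := p.isLt
    exact absurd hfq (not_lt.mpr (le_of_lt (key_lt_key hp hcon)))
  rcases lt_trichotomy (w⁻¹ q) (w⁻¹ p) with hlt | heq | hgt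
  · exact hlt
  · exact absurd ((Equiv.injective _) heq) (ne_of_gt hpq)
  · exact absurd (blockMax_lt w hpq hgt) (not_lt.mpr hbm)

/-! ### Inversion counting -/

/-- The set of value-inversions of `w`. -/
def invVal (w : Equiv.Perm (Fin n)) : Finset (Fin n × Fin n) :=
  Finset.univ.filter fun p : Fin n × Fin n => p.1 < p.2 ∧ w⁻¹ p.2 < w⁻¹ p.1

lemma invNum_eq_card_invVal (w : Equiv.Perm (Fin n)) : invNum w = (invVal w).card := by
  unfold invNum invVal
  apply Finset.card_bij' (fun p _ => (w p.2, w p.1)) (fun p _ => (w⁻¹ p.2, w⁻¹ p.1))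
  · intro a ha
    obtain ⟨-, h1, h2⟩ := Finset.mem_filter.mp ha
    exact Finset.mem_filter.mpr ⟨Finset.mem_univ _, by simpa using h2, by simpa using h1⟩
  · intro a ha
    obtain ⟨-, h1, h2⟩ := Finset.mem_filter.mp ha
    exact Finset.mem_filter.mpr ⟨Finset.mem_univ _, by simpa using h2, by simpa using h1⟩
  · intro a _; simp
  · intro a _; simp

lemma invNum_inv (w : Equiv.Perm (Fin n)) : invNum w⁻¹ = invNum w := by
  rw [invNum_eq_card_invVal]
  unfold invNum invVal
  simp

/-- Length-additive factorization from value-inversion containment. -/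
lemma leR_of_invVal_subset {u w : Equiv.Perm (Fin n)}
    (H : ∀ p q : Fin n, p < q → u⁻¹ q < u⁻¹ p → w⁻¹ q < w⁻¹ p) : leR u w := by
  refine ⟨u⁻¹ * w, by group, ?_⟩
  have hsub : invVal u ⊆ invVal w := by
    intro x hx
    obtain ⟨-, h1, h2⟩ := Finset.mem_filter.mp hx
    exact Finset.mem_filter.mpr ⟨Finset.mem_univ _, h1, H _ _ h1 h2⟩
  rw [invNum_eq_card_invVal, invNum_eq_card_invVal, invNum_eq_card_invVal]
  rw [← Finset.card_sdiff_add_card_eq_card hsub, add_comm]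
  congr 1
  apply Finset.card_bij' (fun x _ => (u⁻¹ x.1, u⁻¹ x.2)) (fun x _ => (u x.1, u x.2))
  · intro x hx
    obtain ⟨hw', hu'⟩ := Finset.mem_sdiff.mp hx
    obtain ⟨-, h1, h2⟩ := Finset.mem_filter.mp hw'
    have hu'' : ¬ (u⁻¹ x.2 < u⁻¹ x.1) := by
      intro hc
      exact hu' (Finset.mem_filter.mpr ⟨Finset.mem_univ _, h1, hc⟩)
    have hne : u⁻¹ x.1 ≠ u⁻¹ x.2 := fun hc => (ne_of_lt h1) ((Equiv.injective _) hc)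
    refine Finset.mem_filter.mpr ⟨Finset.mem_univ _, lt_of_le_of_ne (not_lt.mp hu'') hne, ?_⟩
    show (u⁻¹ * w)⁻¹ (u⁻¹ x.2) < (u⁻¹ * w)⁻¹ (u⁻¹ x.1)
    simpa [mul_inv_rev, Equiv.Perm.mul_apply] using h2
  · intro x hx
    obtain ⟨-, h1, h2⟩ := Finset.mem_filter.mp hx
    have h2' : w⁻¹ (u x.2) < w⁻¹ (u x.1) := by
      simpa [mul_inv_rev, Equiv.Perm.mul_apply] using h2
    have hlt : u x.1 < u x.2 := by
      rcases lt_trichotomy (u x.1) (u x.2) with h | h | h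
      · exact h
      · exact absurd (u.injective h) (ne_of_lt h1)
      · exact absurd (H (u x.2) (u x.1) h (by simpa using h1)) (not_lt.mpr (le_of_lt h2'))
    refine Finset.mem_sdiff.mpr ⟨Finset.mem_filter.mpr ⟨Finset.mem_univ _, hlt, h2'⟩, ?_⟩
    intro hc
    obtain ⟨-, -, hc2⟩ := Finset.mem_filter.mp hc
    simp only [Equiv.Perm.coe_inv, Equiv.symm_apply_apply] at hc2
    exact absurd h1 (not_lt.mpr (le_of_lt hc2))
  · intro a _; simp
  · intro a _; simp

end Aux


/-- `Φ(w) ≤_R w` and `Φ_inv(w) ≤_L w`; i.e. there are length-additive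
factorizations `w = Φ(w)·v` and `w = u·Φ_inv(w)` (this is the definition of `leR`, `leL`). -/
theorem phi_leR_and_phiInv_leL (n : ℕ) (w : Equiv.Perm (Fin n)) :
    leR (Phi w) w ∧ leL (PhiInv w) w := by
  have main : ∀ u : Equiv.Perm (Fin n), leR (Phi u) u := fun u =>
    leR_of_invVal_subset (fun p q hpq h => phi_inversion_subset u hpq h)
  refine ⟨main w, ?_⟩
  obtain ⟨v, hv, hn⟩ := main w⁻¹
  refine ⟨v⁻¹, ?_, ?_⟩
  · rw [PhiInv]
    have h2 := congrArg (fun x : Equiv.Perm (Fin n) => x⁻¹) hv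
    simpa [mul_inv_rev] using h2
  · have e1 : invNum (PhiInv w) = invNum (Phi w⁻¹) := by rw [PhiInv, invNum_inv]
    have e2 : invNum v⁻¹ = invNum v := invNum_inv v
    have e3 : invNum w = invNum w⁻¹ := (invNum_inv w).symm
    rw [e3, hn, e1, e2]
    omega


end RajRegularity
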